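/- Let q be a prime power and n, b, r positive integers with b ≤ n and r ≤ n. If every nonzero vector in F_q^r can be expressed as a linear combination of b cyclically consecutive columns of some full-rank matrix H ∈ F_q^{r×n}, then n(q-1)q^{b-1} ≥ q^r - 1. -/

import Mathlib

open Finset

lemma shift_sum {F M : Type*} [Field F] [AddCommMonoid M] [Module F M]
    (b j0 : ℕ) (hj0 : j0 < b) (d : ℕ → F) (v : ℕ → M)
    (h1 : ∀ k, k < j0 → d k = 0) (h2 : ∀ k, b ≤ k → d k = 0) :
    ∑ j ∈ range b, d (j0 + j) • v (j0 + j) = ∑ j ∈ range b, d j • v j := by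
  have e1 : ∑ j ∈ range b, d (j0 + j) • v (j0 + j)
      = ∑ k ∈ Finset.Ico j0 (j0 + b), d k • v k := by
    rw [Finset.sum_Ico_eq_sum_range]
    simp
  rw [e1]
  have e2 : ∑ k ∈ Finset.Ico j0 (j0 + b), d k • v k
      = ∑ k ∈ Finset.Ico j0 b, d k • v k := by
    refine (Finset.sum_subset (Finset.Ico_subset_Ico le_rfl (by omega)) ?_).symm
    intro k hk hk2
    simp only [Finset.mem_Ico] at hk hk2
    rw [h2 k (by omega), zero_smul]
  rw [e2, Finset.range_eq_Ico]
  refine Finset.sum_subset (Finset.Ico_subset_Ico (by omega) le_rfl) ?_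
  intro k hk hk2
  simp only [Finset.mem_Ico] at hk hk2
  rw [h1 k (by omega), zero_smul]

theorem stmt18 (q n r b : ℕ) (F : Type*) [Field F] [Fintype F]
    (hq : Fintype.card F = q)
    [NeZero n] (hb : 0 < b) (hbn : b ≤ n) (hr : 0 < r) (hrn : r ≤ n)
    (H : Matrix (Fin r) (ZMod n) F) (hrank : H.rank = r)
    (hcov : ∀ z : Fin r → F, z ≠ 0 → ∃ i : ZMod n, ∃ c : Fin b → F,
      z = ∑ j : Fin b, c j • (fun k : Fin r => H k (i + ((j : ℕ) : ZMod n)))) :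
    n * (q - 1) * q ^ (b - 1) ≥ q ^ r - 1 := by
  classical
  obtain ⟨m, rfl⟩ : ∃ m, b = m + 1 := ⟨b - 1, by omega⟩
  -- normalized covering: first coefficient nonzero
  have norm : ∀ z : Fin r → F, z ≠ 0 → ∃ i : ZMod n, ∃ c : Fin (m + 1) → F, c 0 ≠ 0 ∧
      z = ∑ j : Fin (m + 1), c j • (fun k : Fin r => H k (i + ((j : ℕ) : ZMod n))) := by
    intro z hz
    obtain ⟨i, c, hzc⟩ := hcov z hz
    set d : ℕ → F := fun k => if h : k < m + 1 then c ⟨k, h⟩ else 0 with hd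
    set v : ℕ → (Fin r → F) := fun k => (fun t : Fin r => H t (i + (k : ZMod n))) with hv
    have hzd : z = ∑ j ∈ range (m + 1), d j • v j := by
      rw [hzc, ← Fin.sum_univ_eq_sum_range (fun j => d j • v j) (m + 1)]
      refine Finset.sum_congr rfl fun j _ => ?_
      simp [hd, hv, j.isLt]
      exact fun h => absurd h (by have := j.isLt; omega)
    have hex : ∃ k, d k ≠ 0 := by
      by_contra h
      push_neg at h
      apply hz
      rw [hzd]
      exact Finset.sum_eq_zero fun k _ => by rw [h k, zero_smul]
    set j0 := Nat.find hex with hj0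
    have hdj0 : d j0 ≠ 0 := Nat.find_spec hex
    have hj0lt : j0 < m + 1 := by
      by_contra h
      exact hdj0 (by simp only [hd]; exact dif_neg h)
    have hmin : ∀ k, k < j0 → d k = 0 := fun k hk => by
      by_contra h; exact Nat.find_min hex hk h
    have hbig : ∀ k, m + 1 ≤ k → d k = 0 := fun k hk => by simp only [hd]; exact dif_neg (by omega)
    refine ⟨i + (j0 : ZMod n), fun j => d (j0 + j), by simpa using hdj0, ?_⟩
    have hvshift : ∀ j : Fin (m + 1),
        (fun k : Fin r => H k (i + (j0 : ZMod n) + ((j : ℕ) : ZMod n))) = v (j0 + j) := by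
      intro j
      funext t
      simp only [hv]
      congr 1
      push_cast
      ring
    calc z = ∑ j ∈ range (m + 1), d j • v j := hzd
      _ = ∑ j ∈ range (m + 1), d (j0 + j) • v (j0 + j) :=
          (shift_sum (m + 1) j0 hj0lt d v hmin hbig).symm
      _ = ∑ j : Fin (m + 1), d (j0 + j) • v (j0 + j) :=
          (Fin.sum_univ_eq_sum_range (fun j => d (j0 + j) • v (j0 + j)) (m + 1)).symm
      _ = ∑ j : Fin (m + 1), d (j0 + j) •
            (fun k : Fin r => H k (i + (j0 : ZMod n) + ((j : ℕ) : ZMod n))) := by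
          refine Finset.sum_congr rfl fun j _ => ?_
          rw [hvshift j]
  -- injection from nonzero vectors
  have hinj : Fintype.card {z : Fin r → F // z ≠ 0}
      ≤ Fintype.card (ZMod n × {c : Fin (m + 1) → F // c 0 ≠ 0}) := by
    have h := fun z : {z : Fin r → F // z ≠ 0} => norm z.1 z.2
    choose i c hc0 hz using h
    refine Fintype.card_le_of_injective (fun z => (i z, ⟨c z, hc0 z⟩)) ?_
    intro z1 z2 he
    simp only [Prod.mk.injEq, Subtype.mk.injEq] at he
    apply Subtype.ext
    rw [hz z1, hz z2, he.1, he.2]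
  -- compute cardinalities
  have hone : Fintype.card {z : Fin r → F // z = 0} = 1 := Fintype.card_subtype_eq 0
  have hcard1 : Fintype.card {z : Fin r → F // z ≠ 0} = q ^ r - 1 := by
    rw [Fintype.card_subtype_compl, hone, Fintype.card_fun, Fintype.card_fin, hq]
  have honeF : Fintype.card {x : F // x = 0} = 1 := Fintype.card_subtype_eq 0
  have hcard2 : Fintype.card {c : Fin (m + 1) → F // c 0 ≠ 0} = (q - 1) * q ^ m := by
    have e : {c : Fin (m + 1) → F // c 0 ≠ 0} ≃ {x : F // x ≠ 0} × (Fin m → F) :=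
      { toFun := fun c => (⟨c.1 0, c.2⟩, Fin.tail c.1)
        invFun := fun p => ⟨Fin.cons p.1.1 p.2, by simp [p.1.2]⟩
        left_inv := fun c => by
          apply Subtype.ext
          exact Fin.cons_self_tail c.1
        right_inv := fun p => by
          simp [Fin.tail_cons] }
    rw [Fintype.card_congr e, Fintype.card_prod, Fintype.card_fun, Fintype.card_fin,
      Fintype.card_subtype_compl, honeF, hq]
  rw [hcard1, Fintype.card_prod, ZMod.card, hcard2] at hinj
  calc q ^ r - 1 ≤ n * ((q - 1) * q ^ m) := hinj
    _ = n * (q - 1) * q ^ (m + 1 - 1) := by rw [Nat.add_sub_cancel, mul_assoc]
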